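/- Let V be a finite-dimensional vector space over a field of characteristic 0 and N : V → V a nilpotent linear map. Then there exists a unique finite increasing filtration M = (M_w)_{w ∈ ℤ} on V such that N(M_w) ⊆ M_{w-2} for all w and such that for every m ≥ 0 the induced map N^m : gr^M_m → gr^M_{-m} is an isomorphism. -/

import Mathlib

open Submodule

/-- `M` is a finite increasing filtration on `V`. -/
def IsFiltrationFin {E V : Type*} [Field E] [AddCommGroup V] [Module E V]
    (M : ℤ → Submodule E V) : Prop :=
  Monotone M ∧ (∃ a : ℤ, ∀ w ≤ a, M w = ⊥) ∧ (∃ b : ℤ, ∀ w : ℤ, b ≤ w → M w = ⊤)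

/-- `M` is the monodromy weight filtration of the nilpotent operator `N`:
`M` is a finite increasing filtration with `N (M_w) ⊆ M_{w-2}` and, for every `m ≥ 0`,
`N^m` induces an isomorphism `gr^M_m → gr^M_{-m}` (expressed without quotients:
injectivity and surjectivity modulo the lower steps of the filtration). -/
def IsMonodromyFiltration {E V : Type*} [Field E] [AddCommGroup V] [Module E V]
    (N : V →ₗ[E] V) (M : ℤ → Submodule E V) : Prop :=
  IsFiltrationFin M ∧
  (∀ w : ℤ, (M w).map N ≤ M (w - 2)) ∧
  (∀ m : ℕ,
    (∀ x ∈ M (m : ℤ), (N ^ m) x ∈ M (-(m : ℤ) - 1) → x ∈ M ((m : ℤ) - 1)) ∧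
    (∀ y ∈ M (-(m : ℤ)), ∃ x ∈ M (m : ℤ), y - (N ^ m) x ∈ M (-(m : ℤ) - 1)))

section helpers
variable {E V : Type*} [Field E] [AddCommGroup V] [Module E V]
  {N : V →ₗ[E] V} {M : ℤ → Submodule E V}

lemma MF.shift_pow (hM : IsMonodromyFiltration N M) (j : ℕ) :
    ∀ (w : ℤ) (x : V), x ∈ M w → (N ^ j) x ∈ M (w - 2 * (j : ℤ)) := by
  induction j with
  | zero => intro w x hx; simpa using hx
  | succ j ihj =>
      intro w x hx
      have h1 := ihj w x hx
      have h2 : N ((N ^ j) x) ∈ M (w - 2 * (j : ℤ) - 2) := hM.2.1 _ ⟨_, h1, rfl⟩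
      have e : w - 2 * ((j : ℤ) + 1) = w - 2 * (j : ℤ) - 2 := by ring
      have e2 : (N ^ (j + 1)) x = N ((N ^ j) x) := by
        rw [pow_succ']; rfl
      rw [e2]; push_cast; rw [e]; exact h2

lemma MF.pow_zero_of_le {k m : ℕ} (hk : N ^ k = 0) (hm : k ≤ m) : N ^ m = 0 := by
  rw [← Nat.sub_add_cancel hm, pow_add, hk, mul_zero]

lemma MF.forced_top (hM : IsMonodromyFiltration N M) {k : ℕ} (hk : N ^ k = 0) :
    ∀ w : ℤ, (k : ℤ) - 1 ≤ w → M w = ⊤ := by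
  have key : ∀ m : ℕ, k ≤ m → M (m : ℤ) ≤ M ((m : ℤ) - 1) := by
    intro m hm x hx
    refine (hM.2.2 m).1 x hx ?_
    rw [MF.pow_zero_of_le hk hm]
    exact (M _).zero_mem
  obtain ⟨b, hb⟩ := hM.1.2.2
  have chain : ∀ j : ℕ, M ((k : ℤ) - 1 + j) ≤ M ((k : ℤ) - 1) := by
    intro j
    induction j with
    | zero => simp
    | succ j ihj =>
        have e : (k : ℤ) - 1 + ((j : ℤ) + 1) = ((k + j : ℕ) : ℤ) := by push_cast; ring
        have e2 : ((k + j : ℕ) : ℤ) - 1 = (k : ℤ) - 1 + j := by push_cast; ring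
        refine le_trans ?_ ihj
        push_cast
        rw [e]
        exact le_trans (key (k + j) (Nat.le_add_right _ _)) (by rw [e2])
  have htopk : M ((k : ℤ) - 1) = ⊤ := by
    set j : ℕ := (b - ((k : ℤ) - 1)).toNat with hj
    have hbj : b ≤ (k : ℤ) - 1 + j := by
      have := Int.self_le_toNat (b - ((k : ℤ) - 1)); omega
    exact eq_top_iff.mpr (le_trans (le_of_eq (hb _ hbj).symm) (chain j))
  intro w hw
  exact eq_top_iff.mpr (le_trans (le_of_eq htopk.symm) (hM.1.1 hw))

lemma MF.forced_bot (hM : IsMonodromyFiltration N M) {k : ℕ} (hk : N ^ k = 0) :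
    ∀ w : ℤ, w ≤ -(k : ℤ) → M w = ⊥ := by
  have key : ∀ m : ℕ, k ≤ m → M (-(m : ℤ)) ≤ M (-(m : ℤ) - 1) := by
    intro m hm y hy
    obtain ⟨x, _, hz⟩ := (hM.2.2 m).2 y hy
    rw [MF.pow_zero_of_le hk hm] at hz
    simpa using hz
  obtain ⟨a, ha⟩ := hM.1.2.1
  have chain : ∀ j : ℕ, M (-(k : ℤ)) ≤ M (-(k : ℤ) - j) := by
    intro j
    induction j with
    | zero => simp
    | succ j ihj =>
        refine le_trans ihj ?_
        have e : -(k : ℤ) - j = -((k + j : ℕ) : ℤ) := by push_cast; ring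
        have e2 : -((k + j : ℕ) : ℤ) - 1 = -(k : ℤ) - ((j : ℤ) + 1) := by push_cast; ring
        rw [e]
        refine le_trans (key (k + j) (Nat.le_add_right _ _)) ?_
        rw [e2]; push_cast; exact le_rfl
  have hbotk : M (-(k : ℤ)) = ⊥ := by
    set j : ℕ := (-(k : ℤ) - a).toNat with hj
    have haj : -(k : ℤ) - j ≤ a := by
      have := Int.self_le_toNat (-(k : ℤ) - a); omega
    exact le_bot_iff.mp (le_trans (chain j) (le_of_eq (ha _ haj)))
  intro w hw
  exact le_bot_iff.mp (le_trans (hM.1.1 hw) (le_of_eq hbotk))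

lemma MF.forced_ker (hM : IsMonodromyFiltration N M) {k : ℕ} (hk : N ^ k = 0) (hk1 : k ≠ 0) :
    M ((k : ℤ) - 2) = LinearMap.ker (N ^ (k - 1)) := by
  have hc : ((k - 1 : ℕ) : ℤ) = (k : ℤ) - 1 := by omega
  apply le_antisymm
  · intro x hx
    have h := MF.shift_pow hM (k - 1) _ x hx
    have e : (k : ℤ) - 2 - 2 * ((k - 1 : ℕ) : ℤ) = -(k : ℤ) := by omega
    rw [e, MF.forced_bot hM hk _ le_rfl] at h
    simpa using h
  · intro x hx
    have h1 : x ∈ M ((k - 1 : ℕ) : ℤ) := by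
      rw [MF.forced_top hM hk _ (by omega)]; trivial
    have h2 : (N ^ (k - 1)) x ∈ M (-((k - 1 : ℕ) : ℤ) - 1) := by
      rw [LinearMap.mem_ker] at hx
      rw [hx]; exact (M _).zero_mem
    have := (hM.2.2 (k - 1)).1 x h1 h2
    rwa [show ((k - 1 : ℕ) : ℤ) - 1 = (k : ℤ) - 2 by omega] at this

lemma MF.forced_range (hM : IsMonodromyFiltration N M) {k : ℕ} (hk : N ^ k = 0) (hk1 : k ≠ 0) :
    M (1 - (k : ℤ)) = LinearMap.range (N ^ (k - 1)) := by
  have hc : ((k - 1 : ℕ) : ℤ) = (k : ℤ) - 1 := by omega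
  apply le_antisymm
  · intro y hy
    have hy' : y ∈ M (-((k - 1 : ℕ) : ℤ)) := by rwa [show -((k - 1 : ℕ) : ℤ) = 1 - (k : ℤ) by omega]
    obtain ⟨x, _, hz⟩ := (hM.2.2 (k - 1)).2 y hy'
    rw [show -((k - 1 : ℕ) : ℤ) - 1 = -(k : ℤ) by omega, MF.forced_bot hM hk _ le_rfl] at hz
    have : y - (N ^ (k - 1)) x = 0 := by simpa using hz
    exact ⟨x, (sub_eq_zero.mp this).symm⟩
  · rintro _ ⟨x, rfl⟩
    have hx : x ∈ M ((k : ℤ) - 1) := by rw [MF.forced_top hM hk _ le_rfl]; trivial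
    have h := MF.shift_pow hM (k - 1) _ x hx
    rwa [show (k : ℤ) - 1 - 2 * ((k - 1 : ℕ) : ℤ) = 1 - (k : ℤ) by omega] at h

end helpers


theorem MF.aux {E : Type*} [Field E] :
    ∀ (k : ℕ) {V : Type*} [AddCommGroup V] [Module E V] (N : V →ₗ[E] V),
      N ^ k = 0 → ∃! M : ℤ → Submodule E V, IsMonodromyFiltration N M := by
  intro k
  induction k with
  | zero =>
      intro V _ _ N h
      have hz : ∀ x : V, x = 0 := by
        intro x
        have h1 := LinearMap.ext_iff.mp h x
        simpa using h1
      have hsub : ∀ p q : Submodule E V, p = q := by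
        intro p q; ext x; rw [hz x]; simp
      refine ⟨fun _ => ⊥, ⟨⟨monotone_const, ⟨0, fun _ _ => rfl⟩, ⟨0, fun w _ => hsub _ _⟩⟩,
        fun w => le_of_eq (hsub _ _), fun m => ⟨?_, ?_⟩⟩, fun M₁ _ => funext fun w => hsub _ _⟩
      · intro x _ _
        rw [hz x]; exact zero_mem _
      · intro y _
        refine ⟨0, zero_mem _, ?_⟩
        rw [hz (y - (N ^ m) 0)]; exact zero_mem _
  | succ k ih =>
      intro V _ _ N hN
      rcases Nat.eq_zero_or_pos k with rfl | hk1
      · -- N = 0 case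
        have hN0 : N = 0 := by rwa [zero_add, pow_one] at hN
        set M : ℤ → Submodule E V := fun w => if 0 ≤ w then ⊤ else ⊥ with hMdef
        have Mt : ∀ w : ℤ, 0 ≤ w → M w = ⊤ := by
          intro w hw; rw [hMdef]; simp only; rw [if_pos hw]
        have Mb : ∀ w : ℤ, w < 0 → M w = ⊥ := by
          intro w hw; rw [hMdef]; simp only; rw [if_neg (by omega)]
        have hMF : IsMonodromyFiltration N M := by
          refine ⟨⟨?_, ⟨-1, fun w hw => Mb w (by omega)⟩, ⟨0, fun w hw => Mt w hw⟩⟩, ?_, ?_⟩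
          · intro a b h
            by_cases hb : 0 ≤ b
            · rw [Mt b hb]; exact le_top
            · rw [Mb a (by omega)]; exact bot_le
          · intro w y hy
            obtain ⟨x, hx, rfl⟩ := Submodule.mem_map.mp hy
            rw [hN0, LinearMap.zero_apply]
            exact zero_mem _
          · intro m
            constructor
            · intro x hx hxN
              by_cases hm : 1 ≤ m
              · rw [Mt _ (by omega)]; trivial
              · have hm0 : m = 0 := by omega
                subst hm0
                rw [Mb _ (by omega), Submodule.mem_bot] at hxN
                have : x = 0 := by simpa using hxN
                rw [this]; exact zero_mem _
            · intro y hy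
              by_cases hm : 1 ≤ m
              · rw [Mb _ (by omega), Submodule.mem_bot] at hy
                subst hy
                exact ⟨0, zero_mem _, by rw [map_zero, sub_zero]; exact zero_mem _⟩
              · have hm0 : m = 0 := by omega
                subst hm0
                refine ⟨y, by simpa using hy, ?_⟩
                have : y - (N ^ 0) y = 0 := by simp
                rw [this]; exact zero_mem _
        refine ⟨M, hMF, ?_⟩
        intro M₁ hM₁
        have hT1 := MF.forced_top hM₁ hN
        have hB1 := MF.forced_bot hM₁ hN
        funext w
        by_cases hw : 0 ≤ w
        · rw [hT1 w (by push_cast; omega), Mt w hw]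
        · rw [hB1 w (by push_cast; omega), Mb w (by omega)]
      ·
        set V' : Submodule E V := LinearMap.ker (N ^ k) with hV'
        set K : Submodule E V := LinearMap.range (N ^ k) with hK
        have hKV' : K ≤ V' := by
          rintro _ ⟨y, rfl⟩
          have h2 : N ^ (k + k) = 0 := by
            rw [← Nat.sub_add_cancel (show k + 1 ≤ k + k by omega), pow_add, hN, mul_zero]
          show (N ^ k) ((N ^ k) y) = 0
          rw [← Module.End.mul_apply, ← pow_add, h2, LinearMap.zero_apply]
        have hNV' : ∀ x ∈ V', N x ∈ V' := by
          intro x hx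
          show (N ^ k) (N x) = 0
          rw [← Module.End.mul_apply, ← pow_succ, hN, LinearMap.zero_apply]
        set K' : Submodule E V' := K.comap V'.subtype with hK'
        set Nr : V' →ₗ[E] V' := N.restrict hNV' with hNr
        have hNrK' : ∀ x ∈ K', Nr x ∈ K' := by
          rintro ⟨x, hx⟩ hxK
          obtain ⟨y, hy⟩ := hxK
          show N x ∈ K
          have hxy : (N ^ k) y = x := hy
          have h0 : N x = 0 := by
            rw [← hxy, ← Module.End.mul_apply, ← pow_succ', hN, LinearMap.zero_apply]
          rw [h0]; exact zero_mem _
        set N'' : (V' ⧸ K') →ₗ[E] (V' ⧸ K') := Submodule.mapQ K' K' Nr hNrK' with hN''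
        have hNrcoe : ∀ (x : V'), ((Nr x : V') : V) = N (x : V) := fun x =>
          LinearMap.restrict_coe_apply N hNV' x
        have coeNr : ∀ (m : ℕ) (x : V'), (((Nr ^ m) x : V') : V) = (N ^ m) (x : V) := by
          intro m
          induction m with
          | zero => intro x; simp
          | succ m ih =>
              intro x
              have e1 : (Nr ^ (m + 1)) x = (Nr ^ m) (Nr x) := by
                rw [pow_succ, Module.End.mul_apply]
              have e2 : (N ^ (m + 1)) (x : V) = (N ^ m) (N (x : V)) := by
                rw [pow_succ, Module.End.mul_apply]
              rw [e1, e2, ih, hNrcoe]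
        have hNq : ∀ (x : V'), N'' (K'.mkQ x) = K'.mkQ (Nr x) := by
          intro x
          rw [hN'', Submodule.mkQ_apply, Submodule.mkQ_apply, Submodule.mapQ_apply]
        have N''pow : ∀ (m : ℕ) (x : V'), (N'' ^ m) (K'.mkQ x) = K'.mkQ ((Nr ^ m) x) := by
          intro m
          induction m with
          | zero => intro x; simp
          | succ m ih =>
              intro x
              have e1 : (N'' ^ (m + 1)) (K'.mkQ x) = (N'' ^ m) (N'' (K'.mkQ x)) := by
                rw [pow_succ, Module.End.mul_apply]
              have e2 : (Nr ^ (m + 1)) x = (Nr ^ m) (Nr x) := by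
                rw [pow_succ, Module.End.mul_apply]
              rw [e1, e2, hNq, ih]
        have hN''k : N'' ^ k = 0 := by
          apply LinearMap.ext
          intro z
          obtain ⟨x, rfl⟩ := K'.mkQ_surjective z
          rw [N''pow, LinearMap.zero_apply]
          have hx0 : (Nr ^ k) x = 0 := by
            apply Subtype.ext
            rw [coeNr]
            exact x.2
          rw [hx0, map_zero]
        obtain ⟨M'', hM'', huniq''⟩ := ih N'' hN''k
        set Mn : ℤ → Submodule E V := fun w =>
          if (k : ℤ) ≤ w then ⊤ else if w ≤ -(k : ℤ) - 1 then ⊥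
          else Submodule.map V'.subtype (Submodule.comap K'.mkQ (M'' w)) with hMn
        have Mn_top : ∀ w : ℤ, (k : ℤ) ≤ w → Mn w = ⊤ := by
          intro w hw; rw [hMn]; simp only; rw [if_pos hw]
        have Mn_bot : ∀ w : ℤ, w ≤ -(k : ℤ) - 1 → Mn w = ⊥ := by
          intro w hw; rw [hMn]; simp only; rw [if_neg (by omega), if_pos hw]
        have hmem : ∀ w : ℤ, -(k : ℤ) ≤ w → w ≤ (k : ℤ) - 1 → ∀ x : V,
            (x ∈ Mn w ↔ ∃ hx : x ∈ V', K'.mkQ ⟨x, hx⟩ ∈ M'' w) := by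
          intro w h1 h2 x
          have e : Mn w = Submodule.map V'.subtype (Submodule.comap K'.mkQ (M'' w)) := by
            rw [hMn]; simp only; rw [if_neg (by omega), if_neg (by omega)]
          rw [e]
          constructor
          · rintro ⟨y, hy, rfl⟩
            exact ⟨y.2, hy⟩
          · rintro ⟨hx, h⟩
            exact ⟨⟨x, hx⟩, h, rfl⟩
        have hT'' := MF.forced_top hM'' hN''k
        have hB'' := MF.forced_bot hM'' hN''k
        have hk0 : k ≠ 0 := by omega
        have hK'' := MF.forced_ker hM'' hN''k hk0
        have hR'' := MF.forced_range hM'' hN''k hk0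
        have p1 : ∀ v : V, N ((N ^ (k-1)) v) = (N ^ k) v := by
          intro v
          rw [← Module.End.mul_apply, ← pow_succ', Nat.sub_add_cancel hk1]
        have p2 : ∀ v : V, (N ^ (k-1)) (N v) = (N ^ k) v := by
          intro v
          rw [← Module.End.mul_apply, ← pow_succ, Nat.sub_add_cancel hk1]
        have p3 : ∀ v : V, N ((N ^ k) v) = 0 := by
          intro v
          rw [← Module.End.mul_apply, ← pow_succ', hN, LinearMap.zero_apply]
        have hNall : ∀ x : V, N x ∈ V' := by
          intro x
          show (N ^ k) (N x) = 0
          rw [← Module.End.mul_apply, ← pow_succ, hN, LinearMap.zero_apply]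
        have compat : ∀ w : ℤ, (Mn w).map N ≤ Mn (w - 2) := by
          intro w y hy
          obtain ⟨x, hx, rfl⟩ := Submodule.mem_map.mp hy
          by_cases hw1 : (k : ℤ) + 2 ≤ w
          · rw [Mn_top _ (by omega)]; trivial
          by_cases hw2 : (k : ℤ) ≤ w
          · rw [hmem (w - 2) (by omega) (by omega)]
            refine ⟨hNall x, ?_⟩
            by_cases hw3 : w = (k : ℤ) + 1
            · rw [hT'' _ (by omega)]; trivial
            · have hzero : (N'' ^ (k-1)) (K'.mkQ ⟨N x, hNall x⟩) = 0 := by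
                rw [N''pow]
                have hmemK : (Nr ^ (k-1)) ⟨N x, hNall x⟩ ∈ K' := by
                  show (((Nr ^ (k-1)) ⟨N x, hNall x⟩ : V') : V) ∈ K
                  rw [coeNr]
                  exact ⟨x, (p2 x).symm⟩
                rw [Submodule.mkQ_apply]
                exact (Submodule.Quotient.mk_eq_zero K').mpr hmemK
              rw [show w - 2 = ((k:ℤ) - 2) by omega, hK'']
              exact LinearMap.mem_ker.mpr hzero
          · by_cases hw4 : w ≤ -(k:ℤ) - 1
            · rw [Mn_bot _ hw4] at hx
              rw [Submodule.mem_bot] at hx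
              rw [hx, map_zero]; exact zero_mem _
            rw [hmem w (by omega) (by omega)] at hx
            obtain ⟨hxV, hxM⟩ := hx
            by_cases hw5 : 2 - (k:ℤ) ≤ w
            · rw [hmem (w-2) (by omega) (by omega)]
              refine ⟨hNV' x hxV, ?_⟩
              have e : K'.mkQ ⟨N x, hNV' x hxV⟩ = N'' (K'.mkQ ⟨x, hxV⟩) := by
                rw [hNq]
                exact congrArg _ (Subtype.ext (hNrcoe ⟨x, hxV⟩).symm)
              rw [e]
              exact hM''.2.1 w ⟨_, hxM, rfl⟩
            · have hxR : K'.mkQ ⟨x, hxV⟩ ∈ LinearMap.range (N'' ^ (k-1)) := by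
                rw [← hR'']
                exact hM''.1.1 (show w ≤ 1 - (k:ℤ) by omega) hxM
              obtain ⟨z, hz⟩ := hxR
              obtain ⟨y, rfl⟩ := K'.mkQ_surjective z
              rw [N''pow] at hz
              rw [Submodule.mkQ_apply, Submodule.mkQ_apply] at hz
              have hd : (Nr ^ (k-1)) y - ⟨x, hxV⟩ ∈ K' := (Submodule.Quotient.eq K').mp hz
              have hdK : (N ^ (k-1)) (y : V) - x ∈ K := by
                have h2 : (((Nr ^ (k-1)) y - ⟨x, hxV⟩ : V') : V) ∈ K := hd
                rwa [Submodule.coe_sub, coeNr] at h2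
              obtain ⟨u, hu⟩ := hdK
              have hx2 : x = (N ^ (k-1)) (y:V) - (N ^ k) u := by rw [hu]; abel
              have hNx0 : N x = 0 := by
                rw [hx2, map_sub, p1, p3, sub_zero]
                exact y.2
              rw [Mn_bot _ (by omega)]
              rw [Submodule.mem_bot]
              exact hNx0
        have hMF : IsMonodromyFiltration N Mn := by
          refine ⟨⟨?_, ⟨-(k:ℤ) - 1, fun w hw => Mn_bot w hw⟩, ⟨(k:ℤ), fun w hw => Mn_top w hw⟩⟩,
            compat, ?_⟩
          · -- monotone
            intro w₁ w₂ h
            by_cases hc2 : (k : ℤ) ≤ w₂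
            · rw [Mn_top _ hc2]; exact le_top
            by_cases hc1 : w₁ ≤ -(k:ℤ) - 1
            · rw [Mn_bot _ hc1]; exact bot_le
            intro x hx
            rw [hmem w₁ (by omega) (by omega)] at hx
            rw [hmem w₂ (by omega) (by omega)]
            obtain ⟨hxV, hxM⟩ := hx
            exact ⟨hxV, hM''.1.1 h hxM⟩
          · -- graded conditions
            intro m
            constructor
            · -- injectivity
              intro x hxm hxN
              by_cases hm1 : k + 1 ≤ m
              · rw [Mn_top _ (by push_cast; omega)]; trivial
              by_cases hm2 : m = k
              · rw [Mn_bot _ (by omega)] at hxN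
                rw [Submodule.mem_bot] at hxN
                have hxV : x ∈ V' := by
                  show (N ^ k) x = 0
                  rw [← hm2]; exact hxN
                rw [hmem _ (by omega) (by omega)]
                exact ⟨hxV, by rw [hT'' _ (by omega)]; trivial⟩
              · have hmk : m ≤ k - 1 := by omega
                rw [hmem _ (by push_cast; omega) (by push_cast; omega)] at hxm
                obtain ⟨hxV, hxM⟩ := hxm
                rw [hmem _ (by push_cast; omega) (by push_cast; omega)] at hxN
                obtain ⟨hNV, hNM⟩ := hxN
                have e : K'.mkQ ⟨(N ^ m) x, hNV⟩ = (N'' ^ m) (K'.mkQ ⟨x, hxV⟩) := by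
                  rw [N''pow]
                  exact congrArg _ (Subtype.ext (coeNr m ⟨x, hxV⟩).symm)
                rw [e] at hNM
                have := (hM''.2.2 m).1 _ hxM hNM
                rw [hmem _ (by push_cast; omega) (by push_cast; omega)]
                exact ⟨hxV, this⟩
            · -- surjectivity
              intro y hy
              by_cases hm1 : k + 1 ≤ m
              · rw [Mn_bot _ (by push_cast; omega)] at hy
                rw [Submodule.mem_bot] at hy
                subst hy
                exact ⟨0, zero_mem _, by rw [map_zero, sub_zero]; exact zero_mem _⟩
              by_cases hm2 : m = k
              · rw [hmem _ (by omega) (by omega)] at hy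
                obtain ⟨hyV, hyM⟩ := hy
                rw [hB'' _ (by omega), Submodule.mem_bot, Submodule.mkQ_apply] at hyM
                have hyK : (⟨y, hyV⟩ : V') ∈ K' := (Submodule.Quotient.mk_eq_zero K').mp hyM
                obtain ⟨u, hu⟩ := hyK
                refine ⟨u, by rw [Mn_top _ (by omega)]; trivial, ?_⟩
                have hu' : (N ^ m) u = y := by rw [hm2]; exact hu
                rw [hu', sub_self]
                exact zero_mem _
              · have hmk : m ≤ k - 1 := by omega
                rw [hmem _ (by push_cast; omega) (by push_cast; omega)] at hy
                obtain ⟨hyV, hyM⟩ := hy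
                obtain ⟨z, hz1, hz2⟩ := (hM''.2.2 m).2 _ hyM
                obtain ⟨xh, rfl⟩ := K'.mkQ_surjective z
                refine ⟨(xh : V), ?_, ?_⟩
                · rw [hmem _ (by push_cast; omega) (by push_cast; omega)]
                  exact ⟨xh.2, hz1⟩
                · have hdV : y - (N ^ m) (xh : V) ∈ V' := by
                    have := ((⟨y, hyV⟩ : V') - (Nr ^ m) xh).2
                    rwa [Submodule.coe_sub, coeNr] at this
                  rw [hmem _ (by push_cast; omega) (by push_cast; omega)]
                  refine ⟨hdV, ?_⟩
                  have e : (⟨y - (N ^ m) (xh : V), hdV⟩ : V') = (⟨y, hyV⟩ : V') - (Nr ^ m) xh := by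
                    apply Subtype.ext
                    rw [Submodule.coe_sub, coeNr]
                  rw [e, map_sub, ← N''pow]
                  exact hz2
        have huniq : ∀ M₁ : ℤ → Submodule E V, IsMonodromyFiltration N M₁ → M₁ = Mn := by
          intro M₁ hM₁
          have hT1 : ∀ w : ℤ, (k : ℤ) ≤ w → M₁ w = ⊤ := fun w hw =>
            MF.forced_top hM₁ hN w (by push_cast; omega)
          have hB1 : ∀ w : ℤ, w ≤ -(k : ℤ) - 1 → M₁ w = ⊥ := fun w hw =>
            MF.forced_bot hM₁ hN w (by push_cast; omega)
          have hK1 : M₁ ((k:ℤ) - 1) = V' := by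
            have h := MF.forced_ker hM₁ hN (Nat.succ_ne_zero k)
            rw [show ((k+1 : ℕ) : ℤ) - 2 = (k:ℤ) - 1 by push_cast; ring] at h
            rw [show (k + 1) - 1 = k from rfl] at h
            exact h
          have hR1 : M₁ (-(k:ℤ)) = K := by
            have h := MF.forced_range hM₁ hN (Nat.succ_ne_zero k)
            rw [show 1 - ((k+1 : ℕ) : ℤ) = -(k:ℤ) by push_cast; ring] at h
            rw [show (k + 1) - 1 = k from rfl] at h
            exact h
          have hle1 : ∀ w : ℤ, w ≤ (k:ℤ) - 1 → M₁ w ≤ V' := by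
            intro w hw; rw [← hK1]; exact hM₁.1.1 hw
          have hge1 : ∀ w : ℤ, -(k:ℤ) ≤ w → K ≤ M₁ w := by
            intro w hw; rw [← hR1]; exact hM₁.1.1 hw
          set M₁'' : ℤ → Submodule E (V' ⧸ K') :=
            fun w => Submodule.map K'.mkQ (Submodule.comap V'.subtype (M₁ w)) with hM₁''def
          have hmem1 : ∀ (w : ℤ) (z : V' ⧸ K'),
              z ∈ M₁'' w ↔ ∃ xh : V', (xh : V) ∈ M₁ w ∧ K'.mkQ xh = z := by
            intro w z
            rw [hM₁''def]
            simp only [Submodule.mem_map, Submodule.mem_comap]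
            rfl
          have hMF1 : IsMonodromyFiltration N'' M₁'' := by
            refine ⟨⟨?_, ⟨-(k:ℤ), ?_⟩, ⟨(k:ℤ) - 1, ?_⟩⟩, ?_, ?_⟩
            · exact fun w₁ w₂ h => Submodule.map_mono (Submodule.comap_mono (hM₁.1.1 h))
            · -- bot bound
              intro w hw
              rw [eq_bot_iff]
              intro z hz
              obtain ⟨xh, hxh, rfl⟩ := (hmem1 w z).mp hz
              have : (xh : V) ∈ K := by rw [← hR1]; exact hM₁.1.1 hw hxh
              rw [Submodule.mem_bot, Submodule.mkQ_apply]
              exact (Submodule.Quotient.mk_eq_zero K').mpr this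
            · -- top bound
              intro w hw
              rw [eq_top_iff]
              intro z _
              obtain ⟨xh, rfl⟩ := K'.mkQ_surjective z
              refine (hmem1 w _).mpr ⟨xh, ?_, rfl⟩
              exact hM₁.1.1 hw (by rw [hK1]; exact xh.2)
            · -- N'' compat
              intro w z hz
              obtain ⟨z', hz', rfl⟩ := Submodule.mem_map.mp hz
              obtain ⟨xh, hxh, rfl⟩ := (hmem1 w z').mp hz'
              refine (hmem1 (w - 2) _).mpr ⟨Nr xh, ?_, (hNq xh).symm⟩
              rw [hNrcoe]
              exact hM₁.2.1 w ⟨(xh : V), hxh, rfl⟩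
            · intro m
              constructor
              · -- injectivity
                intro z hz hzN
                obtain ⟨xh, hxh, rfl⟩ := (hmem1 _ z).mp hz
                by_cases hm : k ≤ m
                · refine (hmem1 _ _).mpr ⟨xh, ?_, rfl⟩
                  exact hM₁.1.1 (show (k:ℤ) - 1 ≤ (m:ℤ) - 1 by omega) (by rw [hK1]; exact xh.2)
                · rw [N''pow] at hzN
                  obtain ⟨yh, hyh, heq⟩ := (hmem1 _ _).mp hzN
                  rw [Submodule.mkQ_apply, Submodule.mkQ_apply] at heq
                  have hd : yh - (Nr ^ m) xh ∈ K' := (Submodule.Quotient.eq K').mp heq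
                  have hdK : (yh : V) - (N ^ m) (xh : V) ∈ K := by
                    have h2 : (((yh - (Nr ^ m) xh) : V') : V) ∈ K := hd
                    rwa [Submodule.coe_sub, coeNr] at h2
                  have hNm : (N ^ m) (xh : V) ∈ M₁ (-(m:ℤ) - 1) := by
                    have h3 : (N ^ m) (xh : V) = (yh : V) - ((yh : V) - (N ^ m) (xh : V)) := by abel
                    rw [h3]
                    exact sub_mem hyh (hge1 _ (by omega) hdK)
                  have := (hM₁.2.2 m).1 _ hxh hNm
                  exact (hmem1 _ _).mpr ⟨xh, this, rfl⟩
              · -- surjectivity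
                intro z hz
                obtain ⟨yh, hyh, rfl⟩ := (hmem1 _ z).mp hz
                by_cases hm : k ≤ m
                · have hyK : yh ∈ K' := by
                    show (yh : V) ∈ K
                    rw [← hR1]
                    exact hM₁.1.1 (show -(m:ℤ) ≤ -(k:ℤ) by omega) hyh
                  have hy0 : K'.mkQ yh = 0 := by
                    rw [Submodule.mkQ_apply]
                    exact (Submodule.Quotient.mk_eq_zero K').mpr hyK
                  refine ⟨0, zero_mem _, ?_⟩
                  rw [map_zero, sub_zero, hy0]
                  exact zero_mem _
                · obtain ⟨x, hxm, hrem⟩ := (hM₁.2.2 m).2 _ hyh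
                  have hxV : x ∈ V' := hle1 _ (by omega) hxm
                  refine ⟨K'.mkQ ⟨x, hxV⟩, (hmem1 _ _).mpr ⟨⟨x, hxV⟩, hxm, rfl⟩, ?_⟩
                  rw [N''pow, ← map_sub]
                  refine (hmem1 _ _).mpr ⟨yh - (Nr ^ m) ⟨x, hxV⟩, ?_, rfl⟩
                  rw [Submodule.coe_sub, coeNr]
                  exact hrem
          have hfin := huniq'' M₁'' hMF1
          funext w
          by_cases hw1 : (k:ℤ) ≤ w
          · rw [hT1 _ hw1, Mn_top _ hw1]
          by_cases hw2 : w ≤ -(k:ℤ) - 1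
          · rw [hB1 _ hw2, Mn_bot _ hw2]
          apply le_antisymm
          · intro x hx
            have hxV : x ∈ V' := hle1 _ (by omega) hx
            rw [hmem _ (by omega) (by omega)]
            refine ⟨hxV, ?_⟩
            rw [← hfin]
            exact (hmem1 _ _).mpr ⟨⟨x, hxV⟩, hx, rfl⟩
          · intro x hx
            rw [hmem _ (by omega) (by omega)] at hx
            obtain ⟨hxV, hxM⟩ := hx
            rw [← hfin] at hxM
            obtain ⟨yh, hyh, heq⟩ := (hmem1 _ _).mp hxM
            rw [Submodule.mkQ_apply, Submodule.mkQ_apply] at heq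
            have hd : yh - (⟨x, hxV⟩ : V') ∈ K' := (Submodule.Quotient.eq K').mp heq
            have hdK : (yh : V) - x ∈ K := by
              have h2 : (((yh - ⟨x, hxV⟩) : V') : V) ∈ K := hd
              rwa [Submodule.coe_sub] at h2
            have : x = (yh : V) - ((yh : V) - x) := by abel
            rw [this]
            exact sub_mem hyh (hge1 _ (by omega) hdK)
        exact ⟨Mn, hMF, huniq⟩

/-- Existence and uniqueness of the monodromy weight filtration of a nilpotent
operator on a finite-dimensional vector space over a field of characteristic 0. -/
theorem monodromy_filtration_exists_unique
    {E V : Type*} [Field E] [CharZero E] [AddCommGroup V] [Module E V]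
    [FiniteDimensional E V] (N : V →ₗ[E] V) (hN : IsNilpotent N) :
    ∃! M : ℤ → Submodule E V, IsMonodromyFiltration N M := by
  obtain ⟨k, hk⟩ := hN
  exact MF.aux k N hk
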